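/- If a spin (j+1/2) Killing spinor with Killing number μ exists on an n-dimensional manifold of constant sectional curvature c (n ≥ 3, j ≥ 0), then the three algebraic constraints μ²(1 - (n+2j)(n-2)/(n+2j-2)) + (j + n(n-1)/4)c = 0, μ²(1 - (n+2j-2)(n-2)/(n+2j)) + (-(n+j-1) + n(n-1)/4)c = 0 imply c = 4μ²(n-2)/((n+2j-2)(n+2j)) and 4μ² j(n-3)(j+n-1) = 0; hence at least one of: c = 0 and μ = 0, or n = 3, or j = 0. -/
import Mathlib


/-- The algebraic constraints satisfied by a spin `(j+1/2)` Killing spinor with Killing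
number `μ` on an `n`-dimensional manifold of constant sectional curvature `c` force
`c = 4μ²(n-2)/((n+2j-2)(n+2j))` and `4μ²j(n-3)(j+n-1) = 0`; hence `c = 0` and `μ = 0`,
or `n = 3`, or `j = 0`.  Here `μsq` denotes `μ²` (which is real). -/
theorem killing_spinor_constant_curvature_constraints (n j : ℕ) (hn : 3 ≤ n)
    (μsq c : ℝ)
    (h1 : μsq * (1 - (((n : ℝ) + 2 * j) * ((n : ℝ) - 2)) / ((n : ℝ) + 2 * j - 2))
        + ((j : ℝ) + (n : ℝ) * ((n : ℝ) - 1) / 4) * c = 0)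
    (h2 : μsq * (1 - (((n : ℝ) + 2 * j - 2) * ((n : ℝ) - 2)) / ((n : ℝ) + 2 * j))
        + (-((n : ℝ) + (j : ℝ) - 1) + (n : ℝ) * ((n : ℝ) - 1) / 4) * c = 0) :
    c = 4 * μsq * ((n : ℝ) - 2) / (((n : ℝ) + 2 * j - 2) * ((n : ℝ) + 2 * j)) ∧
    4 * μsq * (j : ℝ) * ((n : ℝ) - 3) * ((j : ℝ) + (n : ℝ) - 1) = 0 ∧
    ((c = 0 ∧ μsq = 0) ∨ n = 3 ∨ j = 0) := by
  have hn' : (3:ℝ) ≤ n := by exact_mod_cast hn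
  have hj : (0:ℝ) ≤ j := Nat.cast_nonneg j
  have hA : ((n:ℝ) + 2*j - 2) ≠ 0 := by nlinarith
  have hB : ((n:ℝ) + 2*j) ≠ 0 := by nlinarith
  have hS : ((n:ℝ) + 2*j - 1) ≠ 0 := by nlinarith
  field_simp at h1 h2
  have key4 : ((n:ℝ)+2*j-1) * (c * (((n : ℝ) + 2 * j - 2) * ((n : ℝ) + 2 * j))
      - 4 * ((n:ℝ) - 2) * μsq) = 0 := by
    linear_combination (1/4 : ℝ) * ((((n:ℝ)+2*j)) * h1 - (((n:ℝ)+2*j-2)) * h2)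
  have key : c * (((n : ℝ) + 2 * j - 2) * ((n : ℝ) + 2 * j)) = 4 * ((n:ℝ) - 2) * μsq := by
    rcases mul_eq_zero.mp key4 with h | h
    · exact absurd h hS
    · linarith
  have g2 : 4 * μsq * (j : ℝ) * ((n : ℝ) - 3) * ((j : ℝ) + (n : ℝ) - 1) = 0 := by
    linear_combination -((((n:ℝ)+2*j))/4) * h1 + ((j:ℝ) + (n:ℝ)*((n:ℝ)-1)/4) * key
  have g1 : c = 4 * μsq * ((n : ℝ) - 2) / (((n : ℝ) + 2 * j - 2) * ((n : ℝ) + 2 * j)) := by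
    rw [eq_div_iff (mul_ne_zero hA hB)]
    linarith
  refine ⟨g1, g2, ?_⟩
  by_cases h3 : n = 3
  · exact Or.inr (Or.inl h3)
  by_cases h0 : j = 0
  · exact Or.inr (Or.inr h0)
  left
  have hj1 : (1:ℝ) ≤ j := by exact_mod_cast Nat.one_le_iff_ne_zero.mpr h0
  have hn4 : (4:ℝ) ≤ n := by
    have : 4 ≤ n := by omega
    exact_mod_cast this
  have hμ : μsq = 0 := by
    have p1 : (0:ℝ) < 4 * (j:ℝ) := by linarith
    have p2 : (0:ℝ) < (n:ℝ) - 3 := by linarith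
    have p3 : (0:ℝ) < (j:ℝ) + (n:ℝ) - 1 := by linarith
    have hpos : 4 * (j:ℝ) * ((n:ℝ) - 3) * ((j:ℝ) + (n:ℝ) - 1) > 0 :=
      mul_pos (mul_pos p1 p2) p3
    by_contra hne
    rcases mul_eq_zero.mp g2 with h | h
    · rcases mul_eq_zero.mp h with h' | h'
      · rcases mul_eq_zero.mp h' with h'' | h''
        · rcases mul_eq_zero.mp h'' with h3' | h3'
          · norm_num at h3'
          · exact hne h3'
        · nlinarith
      · nlinarith
    · nlinarith
  have hc : c = 0 := by
    rw [g1, hμ]; ring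
  exact ⟨hc, hμ⟩
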